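/- The common neighborhood matrix of the star graph K_{1,n} (n ≥ 2) has eigenvalues 0 with multiplicity 1, -1 with multiplicity n-1, and n-1 with multiplicity 1. -/

import Mathlib

open Polynomial

lemma eval_charpoly_det {m : ℕ} (M : Matrix (Fin m) (Fin m) ℝ) (x : ℝ) :
    (M.charpoly).eval x
      = (Matrix.of fun i j => (if i = j then x else 0) - M i j).det := by
  rw [Matrix.charpoly, ← Polynomial.coe_evalRingHom, RingHom.map_det]
  congr 1
  ext i j
  by_cases h : i = j
  · subst h; simp [Matrix.charmatrix_apply_eq]
  · simp [Matrix.charmatrix_apply_ne _ _ _ h, h]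

lemma sum_ite_fin (n : ℕ) (a b : ℝ) :
    ∑ j : Fin (n + 1), (if j = 0 then a else b) = a + n * b := by
  have : ∀ j : Fin (n+1), (if j = 0 then a else b) = (if j = 0 then a - b else 0) + b := by
    intro j; by_cases h : j = 0 <;> simp [h]
  rw [Finset.sum_congr rfl fun j _ => this j, Finset.sum_add_distrib,
    Finset.sum_ite_eq' Finset.univ (0 : Fin (n+1)) (fun _ => a - b)]
  simp [Fintype.card_fin]
  ring

theorem star_cn_charpoly (n : ℕ) (hn : 2 ≤ n)
    (CN : Matrix (Fin (n + 1)) (Fin (n + 1)) ℝ)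
    (hCN : ∀ i j, CN i j = if i ≠ j ∧ i ≠ 0 ∧ j ≠ 0 then 1 else 0) :
    CN.charpoly = X * (X + 1) ^ (n - 1) * (X - C ((n : ℝ) - 1)) := by
  apply Polynomial.eq_of_infinite_eval_eq
  refine Set.Infinite.mono ?_ (Set.Ioi_infinite (n : ℝ))
  intro x hx
  simp only [Set.mem_Ioi] at hx
  simp only [Set.mem_setOf_eq]
  have hn0 : (0:ℝ) < (n:ℝ) := by positivity
  have hx1 : x + 1 ≠ 0 := by nlinarith
  set c : ℝ := (x + 1)⁻¹ with hc
  set U : Matrix (Fin (n+1)) (Fin 2) ℝ :=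
    Matrix.of fun i k => if k = 0 then (if i = 0 then 0 else 1) else (if i = 0 then 1 else 0) with hU
  set V : Matrix (Fin 2) (Fin (n+1)) ℝ :=
    Matrix.of fun k j => if k = 0 then (if j = 0 then 0 else 1) else (if j = 0 then 1 else 0) with hV
  have key : (Matrix.of fun i j => (if i = j then x else 0) - CN i j)
      = (x + 1) • ((1 : Matrix (Fin (n+1)) (Fin (n+1)) ℝ) - (c • U) * V) := by
    ext i j
    simp only [Matrix.of_apply, Matrix.smul_apply, Matrix.sub_apply, Matrix.mul_apply,
      Fin.sum_univ_two, Matrix.one_apply, smul_eq_mul]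
    rw [hCN]
    by_cases hij : i = j <;> by_cases hi0 : i = 0 <;> by_cases hj0 : j = 0 <;>
      simp [hU, hV, hij, hi0, hj0, eq_comm, hc] <;> field_simp <;> ring
  have h00 : (V * (c • U)) 0 0 = c * n := by
    rw [Matrix.mul_apply]
    have h : ∀ j : Fin (n+1), V 0 j * (c • U) j 0 = (if j = 0 then 0 else c) := by
      intro j; by_cases hj : j = 0 <;> simp [hU, hV, hj]
    rw [Finset.sum_congr rfl fun j _ => h j, sum_ite_fin]; ring
  have h01 : (V * (c • U)) 0 1 = 0 := by
    rw [Matrix.mul_apply]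
    have h : ∀ j : Fin (n+1), V 0 j * (c • U) j 1 = 0 := by
      intro j; by_cases hj : j = 0 <;> simp [hU, hV, hj]
    rw [Finset.sum_congr rfl fun j _ => h j]; simp
  have h10 : (V * (c • U)) 1 0 = 0 := by
    rw [Matrix.mul_apply]
    have h : ∀ j : Fin (n+1), V 1 j * (c • U) j 0 = 0 := by
      intro j; by_cases hj : j = 0 <;> simp [hU, hV, hj]
    rw [Finset.sum_congr rfl fun j _ => h j]; simp
  have h11 : (V * (c • U)) 1 1 = c := by
    rw [Matrix.mul_apply]
    have h : ∀ j : Fin (n+1), V 1 j * (c • U) j 1 = (if j = 0 then c else 0) := by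
      intro j; by_cases hj : j = 0 <;> simp [hU, hV, hj]
    rw [Finset.sum_congr rfl fun j _ => h j, sum_ite_fin]; ring
  rw [eval_charpoly_det, key, Matrix.det_smul, Matrix.det_one_sub_mul_comm,
    Matrix.det_fin_two]
  simp only [Matrix.sub_apply, Matrix.one_apply_eq, Matrix.one_apply_ne (by norm_num : (0:Fin 2) ≠ 1),
    Matrix.one_apply_ne (by norm_num : (1:Fin 2) ≠ 0), h00, h01, h10, h11]
  simp only [eval_mul, eval_pow, eval_add, eval_sub, eval_X, eval_one, eval_C,
    Fintype.card_fin]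
  have hpow : (x+1)^(n+1) = (x+1)^(n-1) * (x+1)^2 := by
    rw [← pow_add]; congr 1; omega
  rw [hpow, hc]
  field_simp
  ring
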